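/- For every partitions π, μ and ν such that π ⊢ n with n ≥ |μ| and n ≥ |ν|, one has ∑_{i=0}^{m_1(π)} C(m_1(π), i) · g^{π̃∪1^i}_{μ,ν}(α) = C(m_1(μ)+n−|μ|, m_1(μ)) · C(m_1(ν)+n−|ν|, m_1(ν)) · c^π_{μ∪1^{n−|μ|}, ν∪1^{n−|ν|}}(α), where π̃ := π \ 1^{m_1(π)} is the partition obtained from π by deleting all parts equal to 1, and λ∪1^k denotes the partition obtained by adjoining k parts equal to 1. -/

import Mathlib

open scoped Classical

noncomputable section

/-- The base field `ℚ(α)` of rational functions in the Jack parameter `α`. -/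
abbrev F : Type := RatFunc ℚ

/-- The Jack deformation parameter `α`. -/
def alpha : F := RatFunc.X

/-- An integer partition, encoded as a multiset of positive integers (its parts). -/
abbrev JPartition : Type := Multiset ℕ+

/-- The size `|λ|` of a partition. -/
def psize (l : JPartition) : ℕ := (l.map fun i => (i : ℕ)).sum

/-- The length `ℓ(λ)` of a partition. -/
def plen (l : JPartition) : ℕ := Multiset.card l

/-- `m_i(λ)`, the number of parts of `λ` equal to `i`. -/
def pmult (l : JPartition) (i : ℕ+) : ℕ := Multiset.count i l

/-- `λ ∪ 1^k`, adjoining `k` parts equal to `1`. -/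
def addOnes (l : JPartition) (k : ℕ) : JPartition := l + Multiset.replicate k 1

/-- `λ̃`, the partition obtained by deleting all parts equal to `1`. -/
def removeOnes (l : JPartition) : JPartition := Multiset.filter (fun i => i ≠ 1) l

/-- Exponent vectors of monomials in the power-sum generators `p₁, p₂, …`. -/
abbrev Exp : Type := ℕ+ →₀ ℕ

/-- The exponent vector of the monomial `p_λ`. -/
def toExp (l : JPartition) : Exp := l.toFinset.sum fun i => Finsupp.single i (Multiset.count i l)

/-- The partition corresponding to an exponent vector. -/
def toPart (m : Exp) : JPartition := m.sum fun i k => Multiset.replicate k i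

/-- The weighted degree (`deg p_i = i`) of an exponent vector; this is the size of the
corresponding partition. -/
def wt (m : Exp) : ℕ := m.sum fun i k => k * (i : ℕ)

/-- The algebra `ℚ(α)[p₁, p₂, …]` of symmetric functions written in the power-sum basis. -/
abbrev SymA : Type := MvPolynomial ℕ+ F

/-- The power-sum monomial `p_λ`. -/
def pPow (l : JPartition) : SymA := (l.map fun i => MvPolynomial.X i).prod

/-- `z_λ α^{ℓ(λ)}`, attached to the exponent vector of `p_λ`. -/
def zalpha (m : Exp) : F :=
  algebraMap ℚ F (m.prod fun i k => (Nat.factorial k : ℚ) * ((i : ℕ) : ℚ) ^ k) *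
    alpha ^ (m.sum fun _ k => k)

/-- The `α`-deformed Hall scalar product: `⟨p_λ, p_μ⟩ = δ_{λμ} z_λ α^{ℓ(λ)}`. -/
def hall (f g : SymA) : F :=
  ∑ m ∈ f.support, MvPolynomial.coeff m f * MvPolynomial.coeff m g * zalpha m

/-- The parts of a partition, sorted in weakly decreasing order. -/
def sortedParts (l : JPartition) : List ℕ := ((l.map fun i => (i : ℕ)).sort (· ≤ ·)).reverse

/-- The sum of the `k` largest parts of a partition. -/
def topSum (l : JPartition) (k : ℕ) : ℕ := ((sortedParts l).take k).sum

/-- The dominance order on partitions: `μ ⊴ λ`. -/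
def dominates (mu lam : JPartition) : Prop :=
  psize mu = psize lam ∧ ∀ k, topSum mu k ≤ topSum lam k

/-- Evaluation of a symmetric function (in power-sum coordinates) in `N` variables
`x₁, …, x_N`: it sends `p_i ↦ x₁^i + ⋯ + x_N^i`. -/
def evalN (N : ℕ) : SymA →ₐ[F] MvPolynomial (Fin N) F :=
  MvPolynomial.aeval fun i : ℕ+ => ∑ j : Fin N, MvPolynomial.X j ^ (i : ℕ)

/-- The exponent of the monomial `x₁^{μ₁} ⋯ x_s^{μ_s}` in `N` variables, for `μ` a
partition; its coefficient in a symmetric polynomial is the coefficient of the monomial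
symmetric function `m_μ` (provided `N ≥ ℓ(μ)`). -/
def xexp (mu : JPartition) (N : ℕ) : Fin N →₀ ℕ :=
  Finsupp.equivFunOnFinite.symm fun j => (sortedParts mu).getD (j : ℕ) 0

/-- The defining properties of the family of Jack polynomials `J_λ^{(α)}` (Macdonald's
characterization): orthogonality for the `α`-deformed Hall product, triangularity with
respect to monomial symmetric functions in dominance order, and normalization
`[p_{1^n}] J_λ^{(α)} = 1`. -/
structure IsJackFamily (J : JPartition → SymA) : Prop where
  orthogonal : ∀ l m : JPartition, l ≠ m → hall (J l) (J m) = 0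
  triangular : ∀ l m : JPartition, ¬ dominates m l →
    MvPolynomial.coeff (xexp m (psize l + psize m + plen m))
      (evalN (psize l + psize m + plen m) (J l)) = 0
  normalized : ∀ l : JPartition, MvPolynomial.coeff (Finsupp.single 1 (psize l)) (J l) = 1

/-- The Jack character `θ_μ^{(α)}(λ)`. -/
def theta (J : JPartition → SymA) (mu lam : JPartition) : F :=
  if psize lam < psize mu then 0
  else (Nat.choose (psize lam - psize mu + pmult mu 1) (pmult mu 1) : F) *
    MvPolynomial.coeff (toExp (addOnes mu (psize lam - psize mu))) (J lam)

/-- `g` is the family of structure coefficients of Jack characters: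
`θ_μ^{(α)} θ_ν^{(α)} = ∑_π g^π_{μ,ν}(α) θ_π^{(α)}` (as functions on Young diagrams,
with finitely many nonzero terms). -/
def IsStructCoeffs (J : JPartition → SymA) (g : JPartition → JPartition → JPartition → F) :
    Prop :=
  (∀ mu nu : JPartition, {pi : JPartition | g pi mu nu ≠ 0}.Finite) ∧
  ∀ mu nu lam : JPartition,
    theta J mu lam * theta J nu lam = ∑ᶠ pi : JPartition, g pi mu nu * theta J pi lam


/-- `c` is the family of connection coefficients `c^π_{μ,ν}(α)` of Goulden–Jackson,
defined (for three partitions of the same size `n`) by the expansion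
`∑_{n≥0} t^n ∑_{θ⊢n} (1/j_θ^{(α)}) J_θ^{(α)}(p) J_θ^{(α)}(q) J_θ^{(α)}(r)
  = ∑_{n≥0} t^n ∑_{π,μ,ν⊢n} (c^π_{μ,ν}(α)/(z_π α^{ℓ(π)})) p_π q_μ r_ν`,
i.e. by extracting the coefficient of `t^n p_π q_μ r_ν`. -/
def IsConnCoeffs (J : JPartition → SymA)
    (c : JPartition → JPartition → JPartition → F) : Prop :=
  ∀ pi mu nu : JPartition, psize pi = psize mu → psize pi = psize nu →
    c pi mu nu = zalpha (toExp pi) *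
      ∑ᶠ th : JPartition, if psize th = psize pi then
        (hall (J th) (J th))⁻¹ * MvPolynomial.coeff (toExp pi) (J th) *
          MvPolynomial.coeff (toExp mu) (J th) * MvPolynomial.coeff (toExp nu) (J th)
      else 0

lemma toExp_apply (l : JPartition) (i : ℕ+) : toExp l i = Multiset.count i l := by
  classical
  rw [toExp, Finset.sum_apply']
  rw [Finset.sum_eq_single i]
  · simp
  · intro b _ hb
    simp [Finsupp.single_apply, hb, Ne.symm hb]
  · intro h; simp [Multiset.count_eq_zero_of_notMem (by simpa using h)]

lemma count_toPart (m : Exp) (i : ℕ+) : Multiset.count i (toPart m) = m i := by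
  classical
  rw [toPart, Finsupp.sum]
  rw [Multiset.count_sum']
  rw [Finset.sum_eq_single i]
  · simp [Multiset.count_replicate]
  · intro b _ hb
    simp [Multiset.count_replicate, hb, Ne.symm hb]
  · intro h; simp [Finsupp.notMem_support_iff.1 h]

lemma toExp_toPart (m : Exp) : toExp (toPart m) = m := by
  ext i; rw [toExp_apply, count_toPart]

lemma toPart_toExp (l : JPartition) : toPart (toExp l) = l := by
  apply Multiset.ext.2; intro i; rw [count_toPart, toExp_apply]

lemma toExp_injective : Function.Injective toExp := by
  intro a b h; rw [← toPart_toExp a, ← toPart_toExp b, h]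

lemma psize_zero : psize 0 = 0 := rfl

lemma psize_add (a b : JPartition) : psize (a + b) = psize a + psize b := by
  simp [psize]

lemma psize_cons (i : ℕ+) (l : JPartition) : psize (i ::ₘ l) = i + psize l := by
  simp [psize]

lemma wt_toExp (l : JPartition) : wt (toExp l) = psize l := by
  induction l using Multiset.induction_on with
  | empty => simp [wt, toExp, psize]
  | cons i l ih =>
    have hadd : toExp (i ::ₘ l) = Finsupp.single i 1 + toExp l := by
      ext j; rw [toExp_apply]
      simp only [Finsupp.add_apply, toExp_apply, Finsupp.single_apply]
      rw [Multiset.count_cons]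
      by_cases h : j = i
      · subst h; simp [Nat.add_comm]
      · simp [h, Ne.symm h]
    rw [hadd, psize_cons, ← ih]
    rw [wt, wt, Finsupp.sum_add_index]
    · rw [Finsupp.sum_single_index] <;> simp
    · simp
    · intro a _ b c; ring

lemma psize_replicate_one (k : ℕ) : psize (Multiset.replicate k 1) = k := by
  simp [psize, Multiset.map_replicate]

lemma psize_addOnes (l : JPartition) (k : ℕ) : psize (addOnes l k) = psize l + k := by
  rw [addOnes, psize_add, psize_replicate_one]

lemma pmult_addOnes_one (l : JPartition) (k : ℕ) : pmult (addOnes l k) 1 = pmult l 1 + k := by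
  simp [pmult, addOnes, Multiset.count_replicate]

lemma pmult_addOnes_ne (l : JPartition) (k : ℕ) (i : ℕ+) (hi : i ≠ 1) :
    pmult (addOnes l k) i = pmult l i := by
  simp [pmult, addOnes, Multiset.count_replicate, Ne.symm hi]

lemma pmult_removeOnes_one (l : JPartition) : pmult (removeOnes l) 1 = 0 := by
  simp [pmult, removeOnes, Multiset.count_filter]

lemma pmult_removeOnes_ne (l : JPartition) (i : ℕ+) (hi : i ≠ 1) :
    pmult (removeOnes l) i = pmult l i := by
  simp [pmult, removeOnes, Multiset.count_filter, hi]

lemma addOnes_removeOnes_self (l : JPartition) : addOnes (removeOnes l) (pmult l 1) = l := by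
  apply Multiset.ext.2; intro i
  by_cases h : i = 1
  · subst h
    have h1 := pmult_addOnes_one (removeOnes l) (pmult l 1)
    have h2 := pmult_removeOnes_one l
    simp only [pmult] at h1 h2 ⊢
    rw [h1, h2]
    omega
  · have h1 := pmult_addOnes_ne (removeOnes l) (pmult l 1) i h
    rw [pmult_removeOnes_ne l i h] at h1
    simp only [pmult] at h1
    exact h1

lemma addOnes_inj_k (b : JPartition) : Function.Injective (addOnes b) := by
  intro k k' h
  have := congrArg (fun l => pmult l 1) h
  simpa [pmult_addOnes_one] using this

-- m1 ≤ card ≤ psize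

lemma plen_le_psize (l : JPartition) : plen l ≤ psize l := by
  induction l using Multiset.induction_on with
  | empty => simp [plen, psize]
  | cons i l ih =>
    rw [psize_cons]
    simp only [plen, Multiset.card_cons] at ih ⊢
    have : (1 : ℕ) ≤ i := i.one_le
    omega

lemma pmult_le_plen (l : JPartition) (i : ℕ+) : pmult l i ≤ plen l :=
  Multiset.count_le_card i l

lemma psize_removeOnes (l : JPartition) : psize (removeOnes l) = psize l - pmult l 1 := by
  have h := congrArg psize (addOnes_removeOnes_self l)
  rw [psize_addOnes] at h
  omega

lemma pmult_one_le_psize (l : JPartition) : pmult l 1 ≤ psize l :=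
  le_trans (pmult_le_plen l 1) (plen_le_psize l)

-- finiteness of partitions of n

lemma mem_le_psize (l : JPartition) (i : ℕ+) (h : i ∈ l) : (i : ℕ) ≤ psize l := by
  induction l using Multiset.induction_on with
  | empty => simp at h
  | cons j t ih =>
    rw [psize_cons]
    rcases Multiset.mem_cons.1 h with h' | h'
    · subst h'; omega
    · have := ih h'; omega

lemma finite_psize_eq (n : ℕ) : {l : JPartition | psize l = n}.Finite := by
  classical
  by_cases hn : n = 0
  · subst hn
    apply Set.Finite.subset (Set.finite_singleton (0 : JPartition))
    intro l hl
    simp only [Set.mem_setOf_eq] at hl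
    have : plen l = 0 := by have := plen_le_psize l; omega
    simp only [Set.mem_singleton_iff]
    exact Multiset.card_eq_zero.1 this
  · set S : Multiset ℕ+ := n • (Finset.Icc 1 (⟨n, Nat.pos_of_ne_zero hn⟩ : ℕ+)).val with hS
    have hfin : {x : Multiset ℕ+ | x ≤ S}.Finite :=
      Set.Finite.ofFinset S.powerset.toFinset
        (by intro x; simp [Multiset.mem_powerset])
    apply Set.Finite.subset hfin
    intro l hl
    simp only [Set.mem_setOf_eq] at hl
    simp only [Set.mem_setOf_eq]
    rw [Multiset.le_iff_count]
    intro i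
    by_cases hi : i ∈ l
    · have h1 : Multiset.count i l ≤ n := by
        calc Multiset.count i l ≤ plen l := Multiset.count_le_card i l
        _ ≤ psize l := plen_le_psize l
        _ = n := hl
      have h2 : i ∈ Finset.Icc 1 (⟨n, Nat.pos_of_ne_zero hn⟩ : ℕ+) := by
        refine (Finset.mem_Icc (α := {n : ℕ // 0 < n})).2 ?_
        refine ⟨i.one_le, ?_⟩
        have := mem_le_psize l i hi
        rw [hl] at this
        exact this
      rw [hS]; erw [Multiset.count_nsmul]
      calc Multiset.count i l ≤ n := h1
      _ ≤ n * Multiset.count i (Finset.Icc 1 (⟨n, Nat.pos_of_ne_zero hn⟩ : ℕ+)).val := by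
          have : 1 ≤ Multiset.count i (Finset.Icc 1 (⟨n, Nat.pos_of_ne_zero hn⟩ : ℕ+)).val :=
            Multiset.one_le_count_iff_mem.2 h2
          nlinarith
    · rw [Multiset.count_eq_zero_of_notMem hi]; exact Nat.zero_le _

lemma alpha_ne_zero : alpha ≠ 0 := RatFunc.X_ne_zero

lemma charZeroF : CharZero F := charZero_of_injective_algebraMap (algebraMap ℚ F).injective

lemma zfactor_pos (m : Exp) : 0 < m.prod fun i k => (Nat.factorial k : ℚ) * ((i : ℕ) : ℚ) ^ k := by
  rw [Finsupp.prod]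
  apply Finset.prod_pos
  intro i _
  apply mul_pos
  · exact_mod_cast Nat.factorial_pos _
  · apply pow_pos
    exact_mod_cast i.pos

lemma zalpha_ne_zero (m : Exp) : zalpha m ≠ 0 := by
  apply mul_ne_zero
  · exact (map_ne_zero_iff (algebraMap ℚ F) (algebraMap ℚ F).injective).2
      (ne_of_gt (zfactor_pos m))
  · exact pow_ne_zero _ alpha_ne_zero

-- the real embedding

def tR : ℝ := liouvilleNumber 3

lemma tR_transcendental : Transcendental ℚ tR := by
  have h := transcendental_liouvilleNumber (m := 3) (by norm_num)
  rw [Transcendental] at h ⊢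
  intro hc
  exact h ((IsFractionRing.isAlgebraic_iff ℤ ℚ ℝ).2 hc)

lemma tR_pos : 0 < tR := by
  have h := LiouvilleNumber.partialSum_add_remainder (m := 3) (by norm_num) 0
  have h2 := LiouvilleNumber.remainder_pos (m := (3:ℝ)) (by norm_num) 0
  have h3 : 0 < LiouvilleNumber.partialSum 3 0 := by
    norm_num [LiouvilleNumber.partialSum]
  rw [tR]
  rw [← h]
  positivity

lemma aeval_tR_injective : Function.Injective (Polynomial.aeval tR : Polynomial ℚ →ₐ[ℚ] ℝ) :=
  transcendental_iff_injective.mp tR_transcendental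

def ev : F →ₐ[ℚ] ℝ := IsFractionRing.liftAlgHom (g := Polynomial.aeval tR) aeval_tR_injective

lemma ev_alpha : ev alpha = tR := by
  rw [alpha, ← RatFunc.algebraMap_X (K := ℚ)]
  rw [ev, IsFractionRing.liftAlgHom_apply, IsFractionRing.lift_algebraMap]
  simp

lemma ev_zalpha_pos (m : Exp) : 0 < ev (zalpha m) := by
  rw [zalpha, map_mul, map_pow, ev_alpha]
  apply mul_pos
  · have : ev (algebraMap ℚ F (m.prod fun i k => (Nat.factorial k : ℚ) * ((i : ℕ) : ℚ) ^ k))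
        = algebraMap ℚ ℝ (m.prod fun i k => (Nat.factorial k : ℚ) * ((i : ℕ) : ℚ) ^ k) :=
      ev.commutes _
    rw [this, eq_ratCast]
    exact_mod_cast zfactor_pos m
  · exact pow_pos tR_pos _

lemma hall_self_ne_zero (J : JPartition → SymA)
    (hnorm : ∀ l : JPartition, MvPolynomial.coeff (Finsupp.single 1 (psize l)) (J l) = 1)
    (l : JPartition) : hall (J l) (J l) ≠ 0 := by
  intro hzero
  have hmem : (Finsupp.single (1:ℕ+) (psize l)) ∈ (J l).support := by
    rw [MvPolynomial.mem_support_iff, hnorm l]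
    exact one_ne_zero
  have hpos : 0 < ev (hall (J l) (J l)) := by
    rw [hall, map_sum]
    apply Finset.sum_pos'
    · intro m _
      rw [map_mul, map_mul]
      have h1 : ev (MvPolynomial.coeff m (J l)) * ev (MvPolynomial.coeff m (J l))
          = (ev (MvPolynomial.coeff m (J l)))^2 := by ring
      rw [h1]
      exact mul_nonneg (sq_nonneg _) (le_of_lt (ev_zalpha_pos m))
    · refine ⟨Finsupp.single (1:ℕ+) (psize l), hmem, ?_⟩
      rw [hnorm l]
      simpa using ev_zalpha_pos _
  rw [hzero] at hpos
  simp at hpos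

-- ===================== Part 3 : homogeneity =====================

lemma mapcoe_eq (l : JPartition) : (l.map fun i => (i : ℕ)) = Multiset.map PNat.val l := by
  simp

lemma mapcoe_injective : Function.Injective (fun l : JPartition => l.map fun i => (i : ℕ)) := by
  intro a b h
  simp only [mapcoe_eq] at h
  exact Multiset.map_injective (fun x y hxy => PNat.coe_injective hxy) h

-- sortedParts basics

lemma sortedParts_coe (l : JPartition) :
    (↑(sortedParts l) : Multiset ℕ) = l.map (fun i => (i : ℕ)) := by
  rw [sortedParts]
  rw [Multiset.coe_reverse]
  exact Multiset.sort_eq _ _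

lemma sortedParts_length (l : JPartition) : (sortedParts l).length = plen l := by
  have := congrArg Multiset.card (sortedParts_coe l)
  simpa [plen] using this

lemma sortedParts_pos (l : JPartition) (a : ℕ) (h : a ∈ sortedParts l) : 0 < a := by
  have h2 : a ∈ (↑(sortedParts l) : Multiset ℕ) := Multiset.mem_coe.2 h
  rw [sortedParts_coe, mapcoe_eq] at h2
  obtain ⟨i, _, hieq⟩ := Multiset.mem_map.1 h2
  exact hieq ▸ i.pos

lemma sortedParts_sum (l : JPartition) : (sortedParts l).sum = psize l := by
  have := congrArg Multiset.sum (sortedParts_coe l)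
  simpa [psize] using this

lemma xexp_apply (mu : JPartition) (N : ℕ) (j : Fin N) :
    xexp mu N j = (sortedParts mu).getD (j : ℕ) 0 := rfl

lemma xexp_eq_sum (mu : JPartition) (N : ℕ) (h : (sortedParts mu).length ≤ N) :
    xexp mu N = ∑ k : Fin (sortedParts mu).length,
      Finsupp.single (Fin.castLE h k) ((sortedParts mu).get k) := by
  ext j
  rw [xexp_apply, Finsupp.finset_sum_apply]
  by_cases hj : (j : ℕ) < (sortedParts mu).length
  · rw [Finset.sum_eq_single (⟨(j : ℕ), hj⟩ : Fin (sortedParts mu).length)]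
    · rw [Finsupp.single_apply, if_pos (by ext; simp), List.getD_eq_getElem _ _ hj]
      simp [List.get_eq_getElem]
    · intro k _ hk
      rw [Finsupp.single_apply, if_neg]
      intro hc
      apply hk
      ext
      simpa using congrArg Fin.val hc
    · intro hc; exact absurd (Finset.mem_univ _) hc
  · rw [List.getD_eq_default _ _ (le_of_not_gt hj)]
    symm
    apply Finset.sum_eq_zero
    intro k _
    rw [Finsupp.single_apply, if_neg]
    intro hc
    apply hj
    rw [← congrArg Fin.val hc]
    exact k.isLt

lemma xexp_support (mu : JPartition) (N : ℕ) (h : (sortedParts mu).length ≤ N) :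
    (xexp mu N).support = Finset.map (Fin.castLEEmb h) Finset.univ := by
  ext j
  rw [Finsupp.mem_support_iff, xexp_apply]
  constructor
  · intro hj
    by_cases hlt : (j : ℕ) < (sortedParts mu).length
    · rw [Finset.mem_map]
      exact ⟨⟨(j : ℕ), hlt⟩, Finset.mem_univ _, by ext; simp [Fin.castLEEmb]⟩
    · exact absurd (List.getD_eq_default _ _ (le_of_not_gt hlt)) hj
  · intro hj
    rw [Finset.mem_map] at hj
    obtain ⟨k, _, rfl⟩ := hj
    have hlt : ((Fin.castLEEmb h k : Fin N) : ℕ) < (sortedParts mu).length := by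
      simp [Fin.castLEEmb]
    rw [List.getD_eq_getElem _ _ hlt]
    have hmem : (sortedParts mu)[((Fin.castLEEmb h k : Fin N) : ℕ)] ∈ sortedParts mu :=
      List.getElem_mem _
    exact (sortedParts_pos mu _ hmem).ne'

lemma xexp_support_card (mu : JPartition) (N : ℕ) (h : (sortedParts mu).length ≤ N) :
    (xexp mu N).support.card = plen mu := by
  rw [xexp_support mu N h, Finset.card_map, Finset.card_univ, Fintype.card_fin,
    sortedParts_length]

lemma xexp_values (mu : JPartition) (N : ℕ) (h : (sortedParts mu).length ≤ N) :
    (xexp mu N).support.val.map (xexp mu N) = mu.map (fun i => (i : ℕ)) := by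
  rw [xexp_support mu N h]
  rw [Finset.map_val, Multiset.map_map]
  have h1 : ∀ k : Fin (sortedParts mu).length,
      (xexp mu N) (Fin.castLEEmb h k) = (sortedParts mu).get k := by
    intro k
    rw [xexp_apply]
    have hlt : ((Fin.castLEEmb h k : Fin N) : ℕ) < (sortedParts mu).length := by
      simp [Fin.castLEEmb]
    rw [List.getD_eq_getElem _ _ hlt]
    simp [List.get_eq_getElem, Fin.castLEEmb]
  calc Multiset.map (fun k => (xexp mu N) (Fin.castLEEmb h k)) Finset.univ.val
      = Multiset.map ((sortedParts mu).get) Finset.univ.val := by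
        apply Multiset.map_congr rfl
        intro k _
        exact h1 k
    _ = ↑(List.ofFn ((sortedParts mu).get)) := Fin.univ_val_map _
    _ = ↑(sortedParts mu) := by rw [List.ofFn_get]
    _ = mu.map (fun i => (i : ℕ)) := sortedParts_coe mu

lemma xexp_degree (mu : JPartition) (N : ℕ) (h : (sortedParts mu).length ≤ N) :
    (xexp mu N).degree = psize mu := by
  rw [Finsupp.degree_apply, Finset.sum]
  rw [xexp_values mu N h]
  rw [psize]

-- the ℕ-coefficient product polynomials

def PPn (N : ℕ) (s : Multiset ℕ) : MvPolynomial (Fin N) ℕ :=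
  (s.map fun a => ∑ j : Fin N, MvPolynomial.X j ^ a).prod

def PPf (N : ℕ) (s : Multiset ℕ) : MvPolynomial (Fin N) F :=
  (s.map fun a => ∑ j : Fin N, MvPolynomial.X j ^ a).prod

lemma PPf_eq_map (N : ℕ) (s : Multiset ℕ) :
    PPf N s = MvPolynomial.map (Nat.castRingHom F) (PPn N s) := by
  rw [PPf, PPn]
  rw [map_multiset_prod, Multiset.map_map]
  congr 1
  apply Multiset.map_congr rfl
  intro a _
  simp only [Function.comp_apply, map_sum, map_pow, MvPolynomial.map_X]

lemma PPf_homog (N : ℕ) (s : Multiset ℕ) : (PPf N s).IsHomogeneous s.sum := by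
  induction s using Multiset.induction_on with
  | empty => simpa [PPf] using MvPolynomial.isHomogeneous_one (Fin N) F
  | cons a s ih =>
    have : PPf N (a ::ₘ s) = (∑ j : Fin N, MvPolynomial.X j ^ a) * PPf N s := by
      rw [PPf, PPf, Multiset.map_cons, Multiset.prod_cons]
    rw [this, Multiset.sum_cons]
    apply MvPolynomial.IsHomogeneous.mul
    · apply MvPolynomial.IsHomogeneous.sum
      intro j _
      simpa using (MvPolynomial.isHomogeneous_X F j).pow a
    · exact ih

-- Lemma A

lemma lemA {N : ℕ} (s : Multiset ℕ) (hs : ∀ a ∈ s, 0 < a) (e : Fin N →₀ ℕ)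
    (h : MvPolynomial.coeff e (PPf N s) ≠ 0) :
    e.support.card ≤ Multiset.card s ∧
      (e.support.card = Multiset.card s → e.support.val.map e = s) := by
  classical
  induction s using Multiset.induction_on generalizing e with
  | empty =>
    have he : e = 0 := by
      by_contra hne
      rw [PPf] at h
      simp only [Multiset.map_zero, Multiset.prod_zero] at h
      rw [MvPolynomial.coeff_one, if_neg (fun hh => hne hh.symm)] at h
      exact h rfl
    subst he
    simp
  | cons a s ih =>
    have hsplit : PPf N (a ::ₘ s) = (∑ j : Fin N, MvPolynomial.X j ^ a) * PPf N s := by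
      rw [PPf, PPf, Multiset.map_cons, Multiset.prod_cons]
    rw [hsplit, MvPolynomial.coeff_mul] at h
    obtain ⟨⟨u, v⟩, huv, hne⟩ := Finset.exists_ne_zero_of_sum_ne_zero h
    dsimp only at huv hne
    rw [Finset.HasAntidiagonal.mem_antidiagonal] at huv
    have hu : MvPolynomial.coeff u (∑ j : Fin N, (MvPolynomial.X j : MvPolynomial (Fin N) F) ^ a) ≠ 0 :=
      fun hh => hne (mul_eq_zero_of_left hh _)
    have hv : MvPolynomial.coeff v (PPf N s) ≠ 0 :=
      fun hh => hne (mul_eq_zero_of_right _ hh)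
    rw [MvPolynomial.coeff_sum] at hu
    obtain ⟨j, _, hj⟩ := Finset.exists_ne_zero_of_sum_ne_zero hu
    have hu2 : u = Finsupp.single j a := by
      rw [MvPolynomial.X_pow_eq_monomial, MvPolynomial.coeff_monomial] at hj
      by_contra hc
      rw [if_neg (fun hh => hc hh.symm)] at hj
      exact hj rfl
    have ha : (0 : ℕ) < a := hs a (Multiset.mem_cons_self a s)
    have IH := ih (fun b hb => hs b (Multiset.mem_cons_of_mem hb)) v hv
    subst hu2
    have hsupp : e.support ⊆ insert j v.support := by
      rw [← huv]
      intro x hx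
      rcases Finset.mem_union.1 (Finsupp.support_add hx) with h1 | h1
      · rw [Finsupp.support_single_ne_zero j ha.ne'] at h1
        exact Finset.mem_insert.2 (Or.inl (Finset.mem_singleton.1 h1))
      · exact Finset.mem_insert.2 (Or.inr h1)
    have hcard : e.support.card ≤ Multiset.card s + 1 := by
      calc e.support.card ≤ (insert j v.support).card := Finset.card_le_card hsupp
        _ ≤ v.support.card + 1 := Finset.card_insert_le _ _
        _ ≤ Multiset.card s + 1 := Nat.add_le_add_right IH.1 1
    refine ⟨by rw [Multiset.card_cons]; exact hcard, ?_⟩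
    intro hceq
    rw [Multiset.card_cons] at hceq
    have hj_not : j ∉ v.support := by
      intro hmem
      have hins : insert j v.support = v.support := Finset.insert_eq_self.2 hmem
      have : e.support.card ≤ v.support.card := by
        rw [← hins]; exact Finset.card_le_card hsupp
      have := IH.1
      omega
    have hvcard : v.support.card = Multiset.card s := by
      have h1 : (insert j v.support).card = v.support.card + 1 :=
        Finset.card_insert_of_notMem hj_not
      have h2 : e.support.card ≤ (insert j v.support).card := Finset.card_le_card hsupp
      have h3 := IH.1
      omega
    have hsupp_eq : e.support = insert j v.support :=
      Finset.eq_of_subset_of_card_le hsupp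
        (by rw [Finset.card_insert_of_notMem hj_not, hvcard, hceq])
    have hvj : v j = 0 := Finsupp.notMem_support_iff.1 hj_not
    have hej : e j = a := by
      rw [← huv]
      simp [Finsupp.single_apply, hvj]
    have hothers : ∀ x ∈ v.support.val, e x = v x := by
      intro x hx
      have hxj : ¬ j = x := fun hh => hj_not (hh ▸ hx)
      rw [← huv]
      simp [Finsupp.single_apply, hxj]
    rw [hsupp_eq, Finset.insert_val_of_notMem hj_not, Multiset.map_cons, hej]
    rw [Multiset.map_congr rfl hothers]
    rw [IH.2 hvcard]

lemma psize_toPart (m : Exp) : psize (toPart m) = wt m := by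
  rw [← wt_toExp (toPart m), toExp_toPart]

lemma lemB {N : ℕ} (l : List (ℕ × Fin N)) :
    0 < MvPolynomial.coeff ((l.map fun p => Finsupp.single p.2 p.1).sum)
      (PPn N ↑(l.map Prod.fst)) := by
  induction l with
  | nil =>
    simp only [List.map_nil, List.sum_nil, PPn]
    rw [show ((↑([] : List ℕ) : Multiset ℕ)) = 0 from rfl]
    simp only [Multiset.map_zero, Multiset.prod_zero]
    rw [MvPolynomial.coeff_one, if_pos rfl]
    norm_num
  | cons p l ih =>
    have hsplit : PPn N ↑((p :: l).map Prod.fst)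
        = (∑ j : Fin N, (MvPolynomial.X j : MvPolynomial (Fin N) ℕ) ^ p.1) *
          PPn N ↑(l.map Prod.fst) := by
      rw [List.map_cons, PPn, PPn, ← Multiset.cons_coe, Multiset.map_cons, Multiset.prod_cons]
    rw [hsplit, MvPolynomial.coeff_mul]
    apply Finset.sum_pos' (fun x _ => Nat.zero_le _)
    refine ⟨(Finsupp.single p.2 p.1, (l.map fun p => Finsupp.single p.2 p.1).sum), ?_, ?_⟩
    · rw [Finset.HasAntidiagonal.mem_antidiagonal, List.map_cons, List.sum_cons]
    · apply Nat.mul_pos ?_ ih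
      rw [MvPolynomial.coeff_sum]
      apply Finset.sum_pos' (fun j _ => Nat.zero_le _)
      refine ⟨p.2, Finset.mem_univ _, ?_⟩
      rw [MvPolynomial.X_pow_eq_monomial, MvPolynomial.coeff_monomial, if_pos rfl]
      norm_num

lemma prod_toPart {M : Type u_1} [CommMonoid M] (m : Exp) (g : ℕ+ → M) :
    ((toPart m).map g).prod = m.prod fun i k => g i ^ k := by
  induction m using Finsupp.induction with
  | zero => simp [toPart]
  | single_add i k f hif hk ih =>
    have htp : toPart (Finsupp.single i k + f) = Multiset.replicate k i + toPart f := by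
      apply Multiset.ext.2; intro j
      rw [count_toPart, Multiset.count_add, count_toPart, Multiset.count_replicate,
        Finsupp.add_apply, Finsupp.single_apply]
    rw [htp, Multiset.map_add, Multiset.prod_add, Multiset.map_replicate,
      Multiset.prod_replicate, ih]
    rw [Finsupp.prod_add_index' (fun a => pow_zero _) (fun a b c => pow_add _ _ _)]
    congr 1
    exact (Finsupp.prod_single_index (h := fun a b => g a ^ b) (pow_zero _)).symm

lemma evalN_monomial (N : ℕ) (m : Exp) :
    evalN N (MvPolynomial.monomial m (1:F)) = PPf N ((toPart m).map fun i => (i : ℕ)) := by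
  rw [evalN, MvPolynomial.aeval_monomial, map_one, one_mul]
  rw [PPf, mapcoe_eq, Multiset.map_map]
  exact (prod_toPart m _).symm

lemma evalN_coeff_diag_ne_zero (π : JPartition) (N : ℕ) (h : (sortedParts π).length ≤ N) :
    MvPolynomial.coeff (xexp π N) (evalN N (MvPolynomial.monomial (toExp π) (1:F))) ≠ 0 := by
  rw [evalN_monomial, toPart_toExp]
  haveI := charZeroF
  rw [PPf_eq_map, MvPolynomial.coeff_map]
  simp only [Nat.coe_castRingHom, Ne, Nat.cast_eq_zero]
  set L := sortedParts π with hL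
  set l0 : List (ℕ × Fin N) := List.ofFn (fun k : Fin L.length => (L.get k, Fin.castLE h k))
    with hl0
  have h1 : l0.map Prod.fst = L := by
    rw [hl0, List.map_ofFn]
    exact List.ofFn_get L
  have h2 : (l0.map fun p => Finsupp.single p.2 p.1).sum = xexp π N := by
    rw [hl0, List.map_ofFn, List.sum_ofFn]
    exact (xexp_eq_sum π N h).symm
  have h3 : (↑(l0.map Prod.fst) : Multiset ℕ) = π.map fun i => (i : ℕ) := by
    rw [h1, hL]; exact sortedParts_coe π
  have hB := lemB l0
  rw [h2, h3] at hB
  intro hh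
  exact hB.ne' (by exact_mod_cast hh)

theorem homog {J : JPartition → SymA} (hJ : IsJackFamily J) (l : JPartition) (m : Exp)
    (hm : wt m ≠ psize l) : MvPolynomial.coeff m (J l) = 0 := by
  classical
  by_contra hc
  set d := wt m with hd
  set cset : Finset JPartition := ((J l).support.filter fun m' => wt m' = d).image toPart
    with hcset
  have hmem_cset : ∀ π ∈ cset, psize π = d ∧ MvPolynomial.coeff (toExp π) (J l) ≠ 0 := by
    intro π hπ
    rw [hcset, Finset.mem_image] at hπ
    obtain ⟨m', hm', rfl⟩ := hπ
    rw [Finset.mem_filter, MvPolynomial.mem_support_iff] at hm'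
    refine ⟨?_, ?_⟩
    · rw [psize_toPart]; exact hm'.2
    · rw [toExp_toPart]; exact hm'.1
  have hmem_cset' : ∀ m' ∈ (J l).support, wt m' = d → toPart m' ∈ cset := by
    intro m' hm' hw
    rw [hcset, Finset.mem_image]
    exact ⟨m', Finset.mem_filter.2 ⟨hm', hw⟩, rfl⟩
  have hne : cset.Nonempty :=
    ⟨toPart m, hmem_cset' m (MvPolynomial.mem_support_iff.2 hc) rfl⟩
  obtain ⟨π0, hπ0, hmax⟩ := Finset.exists_max_image cset plen hne
  obtain ⟨hπ0d, hπ0c⟩ := hmem_cset π0 hπ0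
  have hlen : (sortedParts π0).length ≤ psize l + psize π0 + plen π0 := by
    rw [sortedParts_length]; omega
  have htri := hJ.triangular l π0 (fun hdom => hm (by rw [← hπ0d]; exact hdom.1))
  set N0 := psize l + psize π0 + plen π0 with hN0
  have hmon : ∀ (c : F) (m' : Exp), evalN N0 (MvPolynomial.monomial m' c)
      = MvPolynomial.C c * evalN N0 (MvPolynomial.monomial m' 1) := by
    intro c m'
    have hcm : MvPolynomial.monomial m' c = MvPolynomial.C c * MvPolynomial.monomial m' 1 := by
      rw [MvPolynomial.C_mul_monomial, mul_one]
    rw [hcm, map_mul]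
    congr 1
    rw [evalN, MvPolynomial.aeval_C, MvPolynomial.algebraMap_eq]
  have hexp : MvPolynomial.coeff (xexp π0 N0) (evalN N0 (J l))
      = ∑ m' ∈ (J l).support, MvPolynomial.coeff m' (J l) *
          MvPolynomial.coeff (xexp π0 N0) (evalN N0 (MvPolynomial.monomial m' 1)) := by
    conv_lhs => rw [← MvPolynomial.support_sum_monomial_coeff (J l)]
    rw [map_sum, MvPolynomial.coeff_sum]
    apply Finset.sum_congr rfl
    intro m' _
    rw [hmon, MvPolynomial.coeff_C_mul]
  have hzero : ∀ m' ∈ (J l).support, m' ≠ toExp π0 →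
      MvPolynomial.coeff m' (J l) *
        MvPolynomial.coeff (xexp π0 N0) (evalN N0 (MvPolynomial.monomial m' 1)) = 0 := by
    intro m' hm' hne'
    rcases eq_or_ne (wt m') d with hw | hw
    · by_contra hterm
      have hK : MvPolynomial.coeff (xexp π0 N0) (evalN N0 (MvPolynomial.monomial m' (1:F))) ≠ 0 :=
        fun hh => hterm (mul_eq_zero_of_right _ hh)
      rw [evalN_monomial] at hK
      have hpos : ∀ a ∈ ((toPart m').map fun i => (i : ℕ)), 0 < a := by
        intro a ha
        rw [mapcoe_eq] at ha
        obtain ⟨i, _, hieq⟩ := Multiset.mem_map.1 ha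
        exact hieq ▸ i.pos
      have hA := lemA _ hpos _ hK
      have hcard1 : (xexp π0 N0).support.card = plen π0 := xexp_support_card π0 N0 hlen
      have hcard2 : Multiset.card ((toPart m').map fun i => (i : ℕ)) = plen (toPart m') := by
        rw [mapcoe_eq, Multiset.card_map]; rfl
      have hle : plen π0 ≤ plen (toPart m') := by
        rw [← hcard1, ← hcard2]; exact hA.1
      have hge : plen (toPart m') ≤ plen π0 := hmax _ (hmem_cset' m' hm' hw)
      have heq := hA.2 (by rw [hcard1, hcard2]; omega)
      rw [xexp_values π0 N0 hlen] at heq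
      have : toPart m' = π0 := (mapcoe_injective heq).symm
      exact hne' (by rw [← this, toExp_toPart])
    · apply mul_eq_zero_of_right
      rw [evalN_monomial]
      apply MvPolynomial.IsHomogeneous.coeff_eq_zero (PPf_homog N0 _)
      rw [xexp_degree π0 N0 hlen, hπ0d]
      have hsum : (((toPart m').map fun i => (i : ℕ)).sum) = wt m' := psize_toPart m'
      rw [hsum]
      exact fun hh => hw (hh ▸ rfl)
  have hfin : MvPolynomial.coeff (xexp π0 N0) (evalN N0 (J l))
      = MvPolynomial.coeff (toExp π0) (J l) *
        MvPolynomial.coeff (xexp π0 N0) (evalN N0 (MvPolynomial.monomial (toExp π0) 1)) := by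
    rw [hexp]
    exact Finset.sum_eq_single_of_mem _ (MvPolynomial.mem_support_iff.2 hπ0c) hzero
  rw [htri] at hfin
  exact (mul_ne_zero hπ0c (evalN_coeff_diag_ne_zero π0 N0 hlen)) hfin.symm

-- ===================== Part 4 : the inverted orthogonality relation =====================

def PnF (n : ℕ) : Finset JPartition := (finite_psize_eq n).toFinset

lemma mem_PnF {n : ℕ} {l : JPartition} : l ∈ PnF n ↔ psize l = n := by
  rw [PnF, Set.Finite.mem_toFinset]; exact Iff.rfl

lemma hall_eq {J : JPartition → SymA} (hJ : IsJackFamily J) (n : ℕ) (θ η : JPartition)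
    (hθ : psize θ = n) :
    hall (J θ) (J η) = ∑ π ∈ PnF n,
      MvPolynomial.coeff (toExp π) (J θ) * MvPolynomial.coeff (toExp π) (J η) *
        zalpha (toExp π) := by
  classical
  rw [hall]
  have himg : ∑ π ∈ PnF n, MvPolynomial.coeff (toExp π) (J θ) *
      MvPolynomial.coeff (toExp π) (J η) * zalpha (toExp π)
      = ∑ m ∈ (PnF n).image toExp, MvPolynomial.coeff m (J θ) *
          MvPolynomial.coeff m (J η) * zalpha m := by
    rw [Finset.sum_image (fun a _ b _ hab => toExp_injective hab)]
  rw [himg]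
  apply Finset.sum_subset
  · intro m hm
    rw [MvPolynomial.mem_support_iff] at hm
    have hwt : wt m = psize θ := by
      by_contra hcc
      exact hm (homog hJ θ m hcc)
    rw [Finset.mem_image]
    refine ⟨toPart m, ?_, toExp_toPart m⟩
    rw [mem_PnF, psize_toPart, hwt, hθ]
  · intro m _ hm
    rw [MvPolynomial.notMem_support_iff.1 hm, zero_mul, zero_mul]

lemma star {J : JPartition → SymA} (hJ : IsJackFamily J) (n : ℕ) (π ρ : JPartition)
    (hπ : psize π = n) (hρ : psize ρ = n) :
    ∑ θ ∈ PnF n, (hall (J θ) (J θ))⁻¹ * MvPolynomial.coeff (toExp π) (J θ) *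
        MvPolynomial.coeff (toExp ρ) (J θ)
      = if π = ρ then (zalpha (toExp π))⁻¹ else 0 := by
  classical
  set In := {x : JPartition // x ∈ PnF n}
  let A : Matrix In In F := fun θ q => MvPolynomial.coeff (toExp q.1) (J θ.1)
  let Z : In → F := fun q => zalpha (toExp q.1)
  let D : In → F := fun θ => hall (J θ.1) (J θ.1)
  have hentry : ∀ θ η : In, (A * Matrix.diagonal Z * A.transpose) θ η
      = ∑ k : In, A θ k * Z k * A η k := by
    intro θ η
    rw [Matrix.mul_apply]
    apply Finset.sum_congr rfl
    intro k _
    rw [Matrix.mul_diagonal, Matrix.transpose_apply]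
  have hAZA : A * Matrix.diagonal Z * A.transpose = Matrix.diagonal D := by
    ext θ η
    rw [hentry θ η]
    have hsum : ∑ k : In, A θ k * Z k * A η k = hall (J θ.1) (J η.1) := by
      rw [hall_eq hJ n θ.1 η.1 (mem_PnF.1 θ.2)]
      rw [← Finset.sum_coe_sort (PnF n)
        (fun p => MvPolynomial.coeff (toExp p) (J θ.1) * MvPolynomial.coeff (toExp p) (J η.1) *
          zalpha (toExp p))]
      apply Finset.sum_congr rfl
      intro k _
      show MvPolynomial.coeff (toExp k.1) (J θ.1) * zalpha (toExp k.1) *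
          MvPolynomial.coeff (toExp k.1) (J η.1) = _
      ring
    rw [hsum]
    by_cases hte : θ = η
    · subst hte
      rw [Matrix.diagonal_apply_eq]
    · rw [Matrix.diagonal_apply_ne _ hte]
      exact hJ.orthogonal θ.1 η.1 (fun hh => hte (Subtype.ext hh))
  have hDne : ∀ θ : In, D θ ≠ 0 := fun θ => hall_self_ne_zero J hJ.normalized θ.1
  have h1 : A * (Matrix.diagonal Z * A.transpose * Matrix.diagonal (fun θ => (D θ)⁻¹)) = 1 := by
    rw [← Matrix.mul_assoc, ← Matrix.mul_assoc, hAZA, Matrix.diagonal_mul_diagonal]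
    rw [show (fun θ => D θ * (D θ)⁻¹) = fun _ => (1:F) from funext fun θ =>
      mul_inv_cancel₀ (hDne θ)]
    exact Matrix.diagonal_one
  have h2 := mul_eq_one_comm.mp h1
  have h3 : A.transpose * Matrix.diagonal (fun θ => (D θ)⁻¹) * A
      = Matrix.diagonal (fun q => (Z q)⁻¹) := by
    have hz1 : Matrix.diagonal (fun q : In => (Z q)⁻¹) * Matrix.diagonal Z
        = (1 : Matrix In In F) := by
      rw [Matrix.diagonal_mul_diagonal]
      rw [show (fun q : In => (Z q)⁻¹ * Z q) = fun _ => (1:F) from funext fun q =>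
        inv_mul_cancel₀ (zalpha_ne_zero _)]
      exact Matrix.diagonal_one
    have h3' : Matrix.diagonal (fun q : In => (Z q)⁻¹) *
        ((Matrix.diagonal Z * A.transpose * Matrix.diagonal (fun θ => (D θ)⁻¹)) * A)
        = Matrix.diagonal (fun q : In => (Z q)⁻¹) := by
      rw [h2, mul_one]
    simp only [← Matrix.mul_assoc] at h3'
    rw [hz1, Matrix.one_mul] at h3'
    exact h3'
  have hπm : π ∈ PnF n := mem_PnF.2 hπ
  have hρm : ρ ∈ PnF n := mem_PnF.2 hρ
  have h4 := congrFun (congrFun h3 ⟨π, hπm⟩) ⟨ρ, hρm⟩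
  have h5 : (A.transpose * Matrix.diagonal (fun θ => (D θ)⁻¹) * A) ⟨π, hπm⟩ ⟨ρ, hρm⟩
      = ∑ θ : In, (D θ)⁻¹ * A θ ⟨π, hπm⟩ * A θ ⟨ρ, hρm⟩ := by
    rw [Matrix.mul_apply]
    apply Finset.sum_congr rfl
    intro θ _
    rw [Matrix.mul_diagonal, Matrix.transpose_apply]
    ring
  rw [h5] at h4
  have h6 : ∑ θ ∈ PnF n, (hall (J θ) (J θ))⁻¹ * MvPolynomial.coeff (toExp π) (J θ) *
      MvPolynomial.coeff (toExp ρ) (J θ)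
      = ∑ θ : In, (D θ)⁻¹ * A θ ⟨π, hπm⟩ * A θ ⟨ρ, hρm⟩ := by
    rw [← Finset.sum_coe_sort (PnF n)
      (fun θ => (hall (J θ) (J θ))⁻¹ * MvPolynomial.coeff (toExp π) (J θ) *
        MvPolynomial.coeff (toExp ρ) (J θ))]
  rw [h6, h4, Matrix.diagonal_apply]
  by_cases hpr : π = ρ
  · rw [if_pos hpr, if_pos (Subtype.ext hpr)]
  · rw [if_neg hpr, if_neg (fun hh => hpr (congrArg Subtype.val hh))]

-- ===================== Part 5 : main theorem =====================

lemma theta_eq {J : JPartition → SymA} (mu th : JPartition) (n : ℕ) (hth : psize th = n)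
    (hmu : psize mu ≤ n) :
    theta J mu th = ((n - psize mu + pmult mu 1).choose (pmult mu 1) : F) *
      MvPolynomial.coeff (toExp (addOnes mu (n - psize mu))) (J th) := by
  rw [theta, if_neg (by omega), hth]

lemma addOnes_addOnes (l : JPartition) (a b : ℕ) :
    addOnes (addOnes l a) b = addOnes l (a + b) := by
  rw [addOnes, addOnes, addOnes, add_assoc, ← Multiset.replicate_add]

lemma removeOnes_addOnes (l : JPartition) (k : ℕ) :
    removeOnes (addOnes l k) = removeOnes l := by
  apply Multiset.ext.2; intro i
  by_cases hi : i = 1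
  · subst hi
    have h1 := pmult_removeOnes_one (addOnes l k)
    have h2 := pmult_removeOnes_one l
    simp only [pmult] at h1 h2
    rw [h1, h2]
  · have h1 := pmult_removeOnes_ne (addOnes l k) i hi
    have h2 := pmult_removeOnes_ne l i hi
    have h3 := pmult_addOnes_ne l k i hi
    simp only [pmult] at h1 h2 h3
    rw [h1, h2, h3]

lemma innSumEq {J : JPartition → SymA} (hJ : IsJackFamily J) (n : ℕ) (π π' : JPartition)
    (hπ : psize π = n) :
    zalpha (toExp π) * ∑ th ∈ PnF n, (hall (J th) (J th))⁻¹ *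
        MvPolynomial.coeff (toExp π) (J th) * theta J π' th
      = if psize π' ≤ n ∧ addOnes π' (n - psize π') = π
        then ((n - psize π' + pmult π' 1).choose (pmult π' 1) : F) else 0 := by
  classical
  by_cases hle : psize π' ≤ n
  · have hρn : psize (addOnes π' (n - psize π')) = n := by rw [psize_addOnes]; omega
    have hsum : ∑ th ∈ PnF n, (hall (J th) (J th))⁻¹ *
        MvPolynomial.coeff (toExp π) (J th) * theta J π' th
        = ((n - psize π' + pmult π' 1).choose (pmult π' 1) : F) *
          ∑ th ∈ PnF n, (hall (J th) (J th))⁻¹ *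
            MvPolynomial.coeff (toExp π) (J th) *
              MvPolynomial.coeff (toExp (addOnes π' (n - psize π'))) (J th) := by
      rw [Finset.mul_sum]
      apply Finset.sum_congr rfl
      intro th hth
      rw [theta_eq π' th n (mem_PnF.1 hth) hle]
      ring
    rw [hsum, star hJ n π (addOnes π' (n - psize π')) hπ hρn]
    by_cases hcond : π = addOnes π' (n - psize π')
    · rw [if_pos hcond, if_pos ⟨hle, hcond.symm⟩]
      field_simp [zalpha_ne_zero]
    · rw [if_neg hcond, mul_zero, mul_zero, if_neg (fun hh => hcond hh.2.symm)]
  · have hz : ∀ th ∈ PnF n, (hall (J th) (J th))⁻¹ *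
        MvPolynomial.coeff (toExp π) (J th) * theta J π' th = 0 := by
      intro th hth
      rw [theta, if_pos (by rw [mem_PnF.1 hth]; omega), mul_zero]
    rw [Finset.sum_congr rfl hz, Finset.sum_const_zero, mul_zero,
      if_neg (fun hh => hle hh.1)]

/-- **Proposition 3.5.** For all partitions `π ⊢ n` and `μ, ν` with `|μ|, |ν| ≤ n`:
`∑_{i=0}^{m₁(π)} C(m₁(π), i) g^{π̃∪1^i}_{μ,ν}
  = C(m₁(μ)+n-|μ|, m₁(μ)) C(m₁(ν)+n-|ν|, m₁(ν)) c^π_{μ∪1^{n-|μ|}, ν∪1^{n-|ν|}}`. -/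
theorem statement6
    (J : JPartition → SymA) (hJ : IsJackFamily J)
    (g : JPartition → JPartition → JPartition → F) (hg : IsStructCoeffs J g)
    (c : JPartition → JPartition → JPartition → F) (hc : IsConnCoeffs J c)
    (pi mu nu : JPartition) (n : ℕ) (hn : psize pi = n)
    (hmu : psize mu ≤ n) (hnu : psize nu ≤ n) :
    ∑ i ∈ Finset.range (pmult pi 1 + 1),
        (Nat.choose (pmult pi 1) i : F) * g (addOnes (removeOnes pi) i) mu nu
      = (Nat.choose (pmult mu 1 + (n - psize mu)) (pmult mu 1) : F) *
        (Nat.choose (pmult nu 1 + (n - psize nu)) (pmult nu 1) : F) *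
        c pi (addOnes mu (n - psize mu)) (addOnes nu (n - psize nu)) := by
  classical
  rw [Nat.add_comm (pmult mu 1) (n - psize mu), Nat.add_comm (pmult nu 1) (n - psize nu)]
  set m1 := pmult pi 1 with hm1
  have hm1n : m1 ≤ n := by
    have := pmult_one_le_psize pi; omega
  set f : ℕ → JPartition := fun i => addOnes (removeOnes pi) i with hf
  set Cmu : F := ((n - psize mu + pmult mu 1).choose (pmult mu 1) : F) with hCmu
  set Cnu : F := ((n - psize nu + pmult nu 1).choose (pmult nu 1) : F) with hCnu
  set mu' := addOnes mu (n - psize mu) with hmu'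
  set nu' := addOnes nu (n - psize nu) with hnu'
  have hmu'n : psize mu' = n := by rw [hmu', psize_addOnes]; omega
  have hnu'n : psize nu' = n := by rw [hnu', psize_addOnes]; omega
  set Sg : Finset JPartition := (hg.1 mu nu).toFinset with hSg
  have hSgmem : ∀ π', π' ∉ Sg → g π' mu nu = 0 := by
    intro π' hπ'
    rw [hSg, Set.Finite.mem_toFinset] at hπ'
    by_contra hcc
    exact hπ' hcc
  set T : JPartition → F := fun π' =>
    if psize π' ≤ n ∧ addOnes π' (n - psize π') = pi
    then ((n - psize π' + pmult π' 1).choose (pmult π' 1) : F) else 0 with hT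
  -- facts about f
  have psize_rem : psize (removeOnes pi) = n - m1 := by
    rw [psize_removeOnes, hn, hm1]
  have psize_f : ∀ i, psize (f i) = (n - m1) + i := by
    intro i; simp only [hf]; rw [psize_addOnes, psize_rem]
  have pmult_f : ∀ i, pmult (f i) 1 = i := by
    intro i; simp only [hf]; rw [pmult_addOnes_one, pmult_removeOnes_one]; omega
  have f_inj : ∀ a b, f a = f b → a = b := by
    intro a b hab
    have := congrArg (fun l => pmult l 1) hab
    simpa [pmult_f] using this
  have T_f : ∀ i, i ≤ m1 → T (f i) = (m1.choose i : F) := by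
    intro i hi
    have h1 : psize (f i) ≤ n := by rw [psize_f]; omega
    have h2 : n - psize (f i) = m1 - i := by rw [psize_f]; omega
    have h3 : addOnes (f i) (n - psize (f i)) = pi := by
      rw [h2]; simp only [hf]
      rw [addOnes_addOnes]
      rw [show i + (m1 - i) = m1 from by omega]
      rw [hm1]
      exact addOnes_removeOnes_self pi
    simp only [hT]
    rw [if_pos ⟨h1, h3⟩, h2, pmult_f, Nat.sub_add_cancel hi]
  have T_cond : ∀ π', (psize π' ≤ n ∧ addOnes π' (n - psize π') = pi) →
      π' = f (pmult π' 1) ∧ pmult π' 1 ≤ m1 := by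
    intro π' ⟨h1, h2⟩
    have hk : pmult pi 1 = pmult π' 1 + (n - psize π') := by
      rw [← h2, pmult_addOnes_one]
    have hrem : removeOnes pi = removeOnes π' := by
      rw [← h2, removeOnes_addOnes]
    constructor
    · simp only [hf]
      rw [hrem]
      exact (addOnes_removeOnes_self π').symm
    · omega
  -- the c side
  have hcc := hc pi mu' nu' (by rw [hmu'n, hn]) (by rw [hnu'n, hn])
  have hfin1 : (∑ᶠ th : JPartition, if psize th = psize pi then
        (hall (J th) (J th))⁻¹ * MvPolynomial.coeff (toExp pi) (J th) *
          MvPolynomial.coeff (toExp mu') (J th) * MvPolynomial.coeff (toExp nu') (J th)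
      else 0)
      = ∑ th ∈ PnF n, (hall (J th) (J th))⁻¹ * MvPolynomial.coeff (toExp pi) (J th) *
          MvPolynomial.coeff (toExp mu') (J th) * MvPolynomial.coeff (toExp nu') (J th) := by
    have hsub : (Function.support fun th : JPartition => if psize th = psize pi then
        (hall (J th) (J th))⁻¹ * MvPolynomial.coeff (toExp pi) (J th) *
          MvPolynomial.coeff (toExp mu') (J th) * MvPolynomial.coeff (toExp nu') (J th)
      else 0) ⊆ ↑(PnF n) := by
      intro th hth
      rw [Function.mem_support] at hth
      rw [Finset.mem_coe, mem_PnF]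
      by_contra hne
      exact hth (if_neg (by rw [hn]; exact hne))
    rw [finsum_eq_sum_of_support_subset _ hsub]
    apply Finset.sum_congr rfl
    intro th hth
    rw [if_pos (by rw [mem_PnF.1 hth, hn])]
  have hfin2 : ∀ th : JPartition, (∑ᶠ π' : JPartition, g π' mu nu * theta J π' th)
      = ∑ π' ∈ Sg, g π' mu nu * theta J π' th := by
    intro th
    apply finsum_eq_sum_of_support_subset
    intro π' hπ'
    rw [Function.mem_support] at hπ'
    rw [Finset.mem_coe, hSg, Set.Finite.mem_toFinset]
    exact fun hzz => hπ' (by rw [hzz, zero_mul])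
  have haveA : Cmu * Cnu * (zalpha (toExp pi) *
      ∑ th ∈ PnF n, (hall (J th) (J th))⁻¹ * MvPolynomial.coeff (toExp pi) (J th) *
        MvPolynomial.coeff (toExp mu') (J th) * MvPolynomial.coeff (toExp nu') (J th))
      = zalpha (toExp pi) * ∑ th ∈ PnF n, (hall (J th) (J th))⁻¹ *
          MvPolynomial.coeff (toExp pi) (J th) * (theta J mu th * theta J nu th) := by
    rw [show Cmu * Cnu * (zalpha (toExp pi) *
      ∑ th ∈ PnF n, (hall (J th) (J th))⁻¹ * MvPolynomial.coeff (toExp pi) (J th) *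
        MvPolynomial.coeff (toExp mu') (J th) * MvPolynomial.coeff (toExp nu') (J th))
      = zalpha (toExp pi) * ((Cmu * Cnu) *
      ∑ th ∈ PnF n, (hall (J th) (J th))⁻¹ * MvPolynomial.coeff (toExp pi) (J th) *
        MvPolynomial.coeff (toExp mu') (J th) * MvPolynomial.coeff (toExp nu') (J th))
      from by ring]
    rw [Finset.mul_sum]
    congr 1
    apply Finset.sum_congr rfl
    intro th hth
    rw [theta_eq mu th n (mem_PnF.1 hth) hmu, theta_eq nu th n (mem_PnF.1 hth) hnu,
      ← hmu', ← hnu', ← hCmu, ← hCnu]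
    ring
  have haveB : (∑ th ∈ PnF n, (hall (J th) (J th))⁻¹ *
      MvPolynomial.coeff (toExp pi) (J th) * (theta J mu th * theta J nu th))
      = ∑ π' ∈ Sg, g π' mu nu * ∑ th ∈ PnF n, (hall (J th) (J th))⁻¹ *
          MvPolynomial.coeff (toExp pi) (J th) * theta J π' th := by
    calc (∑ th ∈ PnF n, (hall (J th) (J th))⁻¹ *
        MvPolynomial.coeff (toExp pi) (J th) * (theta J mu th * theta J nu th))
        = ∑ th ∈ PnF n, ∑ π' ∈ Sg, (hall (J th) (J th))⁻¹ *
            MvPolynomial.coeff (toExp pi) (J th) * (g π' mu nu * theta J π' th) := by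
          apply Finset.sum_congr rfl
          intro th hth
          rw [hg.2 mu nu th, hfin2 th, Finset.mul_sum]
      _ = ∑ π' ∈ Sg, ∑ th ∈ PnF n, (hall (J th) (J th))⁻¹ *
            MvPolynomial.coeff (toExp pi) (J th) * (g π' mu nu * theta J π' th) :=
          Finset.sum_comm
      _ = ∑ π' ∈ Sg, g π' mu nu * ∑ th ∈ PnF n, (hall (J th) (J th))⁻¹ *
            MvPolynomial.coeff (toExp pi) (J th) * theta J π' th := by
          apply Finset.sum_congr rfl
          intro π' _
          rw [Finset.mul_sum]
          apply Finset.sum_congr rfl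
          intro th _
          ring
  have haveC : zalpha (toExp pi) * (∑ π' ∈ Sg, g π' mu nu *
      ∑ th ∈ PnF n, (hall (J th) (J th))⁻¹ *
        MvPolynomial.coeff (toExp pi) (J th) * theta J π' th)
      = ∑ π' ∈ Sg, g π' mu nu * T π' := by
    rw [Finset.mul_sum]
    apply Finset.sum_congr rfl
    intro π' _
    rw [show zalpha (toExp pi) * (g π' mu nu * ∑ th ∈ PnF n, (hall (J th) (J th))⁻¹ *
        MvPolynomial.coeff (toExp pi) (J th) * theta J π' th)
      = g π' mu nu * (zalpha (toExp pi) * ∑ th ∈ PnF n, (hall (J th) (J th))⁻¹ *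
        MvPolynomial.coeff (toExp pi) (J th) * theta J π' th) from by ring]
    rw [innSumEq hJ n pi π' hn]
  have key : Cmu * Cnu * c pi mu' nu' = ∑ π' ∈ Sg, g π' mu nu * T π' := by
    rw [hcc, hfin1, haveA, haveB, haveC]
  have himg : ∑ i ∈ Finset.range (m1+1), (m1.choose i : F) * g (f i) mu nu
      = ∑ π' ∈ (Finset.range (m1+1)).image f, (m1.choose (pmult π' 1) : F) * g π' mu nu := by
    rw [Finset.sum_image (fun a _ b _ hab => f_inj a b hab)]
    apply Finset.sum_congr rfl
    intro i _
    rw [pmult_f]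
  have key2 : ∑ π' ∈ Sg, g π' mu nu * T π'
      = ∑ i ∈ Finset.range (m1+1), (m1.choose i : F) * g (f i) mu nu := by
    have e1 : ∑ π' ∈ Sg, g π' mu nu * T π'
        = ∑ π' ∈ Sg ∪ (Finset.range (m1+1)).image f, g π' mu nu * T π' := by
      apply Finset.sum_subset Finset.subset_union_left
      intro π' _ hπ'
      rw [hSgmem π' hπ', zero_mul]
    have e2 : ∀ π' ∈ Sg ∪ (Finset.range (m1+1)).image f, g π' mu nu * T π'
        = if π' ∈ (Finset.range (m1+1)).image f
          then (m1.choose (pmult π' 1) : F) * g π' mu nu else 0 := by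
      intro π' _
      by_cases him : π' ∈ (Finset.range (m1+1)).image f
      · rw [if_pos him]
        obtain ⟨i, hi, rfl⟩ := Finset.mem_image.1 him
        rw [T_f i (by rw [Finset.mem_range] at hi; omega), pmult_f]
        ring
      · rw [if_neg him]
        by_cases hcond : psize π' ≤ n ∧ addOnes π' (n - psize π') = pi
        · exfalso
          obtain ⟨heqf, hle⟩ := T_cond π' hcond
          exact him (Finset.mem_image.2 ⟨pmult π' 1, Finset.mem_range.2 (by omega), heqf.symm⟩)
        · rw [show T π' = 0 from by simp only [hT]; rw [if_neg hcond], mul_zero]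
    rw [e1, Finset.sum_congr rfl e2, Finset.sum_ite_mem,
      Finset.inter_eq_right.mpr Finset.subset_union_right]
    exact himg.symm
  rw [key, key2]


end
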